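/- For u(x) = |x|^{4-n} in ℝⁿ \ {0} with n ≥ 5, the Pohozaev boundary term B(r,x,u,∇u,∇²u,∇³u) = -((n-2)/2) Δu ∂u/∂ν - (r/2)|Δu|² + ((n-4)/2) u ∂(Δu)/∂ν + ⟨x,∇u⟩ ∂(Δu)/∂ν - Δu Σᵢ xᵢ ∂uᵢ/∂ν vanishes identically on ∂B_r for every r > 0. -/

import Mathlib

open MeasureTheory Metric Set

noncomputable section

abbrev En (n : ℕ) := EuclideanSpace ℝ (Fin n)

/-- Partial derivative `∂u/∂xᵢ`. -/
def pd {n : ℕ} (i : Fin n) (u : En n → ℝ) (x : En n) : ℝ :=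
  fderiv ℝ u x (EuclideanSpace.single i 1)

/-- The Laplacian with the paper's sign convention `Δφ = -∑ ∂²φ/∂xᵢ²`. -/
def lap {n : ℕ} (u : En n → ℝ) (x : En n) : ℝ :=
  -∑ i, pd i (pd i u) x

/-- Normal derivative `∂u/∂ν` on `∂B_r`: `ν = x/r`, so `∂u/∂ν = (1/r) ∑ xᵢ ∂u/∂xᵢ`. -/
def ndiv {n : ℕ} (r : ℝ) (u : En n → ℝ) (x : En n) : ℝ :=
  (∑ i, x i * pd i u x) / r

/-- The Pohozaev boundary term
`B = -((n-2)/2) Δu ∂u/∂ν - (r/2)|Δu|² + ((n-4)/2) u ∂(Δu)/∂ν + ⟨x,∇u⟩ ∂(Δu)/∂ν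
     - Δu ∑ᵢ xᵢ ∂uᵢ/∂ν`. -/
def Bterm (n : ℕ) (r : ℝ) (u : En n → ℝ) (x : En n) : ℝ :=
  -(((n : ℝ) - 2) / 2) * lap u x * ndiv r u x
  - (r / 2) * (lap u x) ^ 2
  + (((n : ℝ) - 4) / 2) * u x * ndiv r (lap u) x
  + (∑ i, x i * pd i u x) * ndiv r (lap u) x
  - lap u x * ∑ i, x i * ndiv r (pd i u) x


namespace BAux

variable {n : ℕ}

def g (x : En n) : ℝ := ∑ j, x j * x j

lemma g_nonneg (x : En n) : 0 ≤ g x :=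
  Finset.sum_nonneg fun j _ => mul_self_nonneg _

lemma g_cont : Continuous (g (n := n)) := by
  unfold g
  exact continuous_finset_sum _ fun j _ =>
    ((continuous_apply j).comp (PiLp.continuous_ofLp ..)).mul
      ((continuous_apply j).comp (PiLp.continuous_ofLp ..))

def D (x : En n) : En n →L[ℝ] ℝ :=
  ∑ j, (2 * x j) • (EuclideanSpace.proj j : En n →L[ℝ] ℝ)

lemma D_apply (x : En n) (i : Fin n) : D x (EuclideanSpace.single i 1) = 2 * x i := by
  simp [D, ContinuousLinearMap.sum_apply, EuclideanSpace.single_apply]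

lemma hasFDerivAt_g (x : En n) : HasFDerivAt g (D x) x := by
  have h : ∀ j : Fin n, HasFDerivAt (fun y : En n => y j * y j)
      ((2 * x j) • (EuclideanSpace.proj j : En n →L[ℝ] ℝ)) x := by
    intro j
    have := ((EuclideanSpace.proj (𝕜 := ℝ) j).hasFDerivAt (x := x)).fun_mul
      ((EuclideanSpace.proj (𝕜 := ℝ) j).hasFDerivAt (x := x))
    simpa [two_mul, add_smul] using this
  have := HasFDerivAt.fun_sum (fun j (_ : j ∈ Finset.univ) => h j)
  exact this

lemma hasFDerivAt_gpow (β : ℝ) (x : En n) (hx : g x ≠ 0) :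
    HasFDerivAt (fun y => g y ^ β) ((β * g x ^ (β - 1)) • D x) x :=
  (hasFDerivAt_g x).rpow_const (Or.inl hx)

lemma pd_gpow (β : ℝ) (i : Fin n) (x : En n) (hx : g x ≠ 0) :
    pd i (fun y => g y ^ β) x = β * g x ^ (β - 1) * (2 * x i) := by
  rw [pd, (hasFDerivAt_gpow β x hx).fderiv]
  simp [D_apply, mul_assoc]

lemma pd_gpow_mul (β : ℝ) (k i : Fin n) (x : En n) (hx : g x ≠ 0) :
    pd i (fun y => g y ^ β * y k) x
      = g x ^ β * (if k = i then 1 else 0) + x k * (β * g x ^ (β - 1) * (2 * x i)) := by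
  have h : HasFDerivAt (fun y : En n => g y ^ β * y k)
      (g x ^ β • (EuclideanSpace.proj k : En n →L[ℝ] ℝ)
        + x k • (β * g x ^ (β - 1)) • D x) x :=
    (hasFDerivAt_gpow β x hx).mul ((EuclideanSpace.proj (𝕜 := ℝ) k).hasFDerivAt (x := x))
  rw [pd, h.fderiv]
  simp [D_apply, EuclideanSpace.single_apply, mul_assoc]

lemma eventually_g_ne (x : En n) (hx : g x ≠ 0) : ∀ᶠ y in nhds x, g y ≠ 0 :=
  g_cont.continuousAt.eventually_ne hx

lemma U_eq : (fun y : En n => ‖y‖ ^ ((4 : ℝ) - n)) = fun y => g y ^ (((4 : ℝ) - n) / 2) := by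
  funext y
  have hg : (∑ i, ‖y i‖ ^ 2) = g y := by simp [g, sq, Real.norm_eq_abs, sq_abs, sq]
  rw [EuclideanSpace.norm_eq, hg, Real.sqrt_eq_rpow, ← Real.rpow_mul (g_nonneg y)]
  congr 1
  ring

lemma pd_U (i : Fin n) (x : En n) (hx : g x ≠ 0) :
    pd i (fun y : En n => ‖y‖ ^ ((4 : ℝ) - n)) x
      = ((4 : ℝ) - n) * g x ^ (((4 : ℝ) - n) / 2 - 1) * x i := by
  rw [U_eq, pd_gpow _ i x hx]; ring

lemma pd_pd_U (i j : Fin n) (x : En n) (hx : g x ≠ 0) :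
    pd j (pd i (fun y : En n => ‖y‖ ^ ((4 : ℝ) - n))) x
      = ((4 : ℝ) - n) * (g x ^ (((4 : ℝ) - n) / 2 - 1) * (if i = j then 1 else 0)
          + x i * ((((4 : ℝ) - n) / 2 - 1) * g x ^ (((4 : ℝ) - n) / 2 - 2) * (2 * x j))) := by
  set a : ℝ := (4 : ℝ) - n with ha
  have hev : pd i (fun y : En n => ‖y‖ ^ ((4 : ℝ) - n))
      =ᶠ[nhds x] fun y => a * (g y ^ (a / 2 - 1) * y i) := by
    filter_upwards [eventually_g_ne x hx] with y hy
    rw [pd_U i y hy]; ring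
  have hdiff : DifferentiableAt ℝ (fun y : En n => g y ^ (a / 2 - 1) * y i) x :=
    ((hasFDerivAt_gpow (a / 2 - 1) x hx).mul
      ((EuclideanSpace.proj (𝕜 := ℝ) i).hasFDerivAt (x := x))).differentiableAt
  rw [pd, hev.fderiv_eq, fderiv_const_mul hdiff]
  have h2 := pd_gpow_mul (a / 2 - 1) i j x hx
  rw [pd] at h2
  simp only [ContinuousLinearMap.coe_smul', Pi.smul_apply, smul_eq_mul]
  rw [h2, show a / 2 - 1 - 1 = a / 2 - 2 by ring]

lemma lap_U (x : En n) (hx : g x ≠ 0) :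
    lap (fun y : En n => ‖y‖ ^ ((4 : ℝ) - n)) x
      = (-2 * ((4 : ℝ) - n)) * g x ^ (((4 : ℝ) - n) / 2 - 1) := by
  set a : ℝ := (4 : ℝ) - n with ha
  have ht : g x ^ (a / 2 - 1) = g x ^ (a / 2 - 2) * g x := by
    rw [show a / 2 - 1 = (a / 2 - 2) + 1 by ring, Real.rpow_add_one hx]
  rw [lap]
  have hterm : ∀ i : Fin n, pd i (pd i (fun y : En n => ‖y‖ ^ ((4 : ℝ) - n))) x
      = a * g x ^ (a / 2 - 1) + a * (a - 2) * g x ^ (a / 2 - 2) * (x i * x i) := by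
    intro i
    rw [pd_pd_U i i x hx, if_pos rfl]
    ring
  rw [Finset.sum_congr rfl fun i _ => hterm i, Finset.sum_add_distrib, Finset.sum_const,
    ← Finset.mul_sum]
  show -((Finset.univ.card : ℕ) • (a * g x ^ (a / 2 - 1)) + a * (a - 2) * g x ^ (a / 2 - 2) * g x) = _
  rw [ht]
  simp only [Finset.card_univ, Fintype.card_fin, nsmul_eq_mul]
  ring

lemma pd_lap_U (j : Fin n) (x : En n) (hx : g x ≠ 0) :
    pd j (lap (fun y : En n => ‖y‖ ^ ((4 : ℝ) - n))) x
      = (-2 * ((4 : ℝ) - n)) * ((((4 : ℝ) - n) / 2 - 1) * g x ^ (((4 : ℝ) - n) / 2 - 2)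
          * (2 * x j)) := by
  set a : ℝ := (4 : ℝ) - n with ha
  have hev : lap (fun y : En n => ‖y‖ ^ ((4 : ℝ) - n))
      =ᶠ[nhds x] fun y => (-2 * a) * g y ^ (a / 2 - 1) := by
    filter_upwards [eventually_g_ne x hx] with y hy
    exact lap_U y hy
  have hdiff : DifferentiableAt ℝ (fun y : En n => g y ^ (a / 2 - 1)) x :=
    (hasFDerivAt_gpow (a / 2 - 1) x hx).differentiableAt
  rw [pd, hev.fderiv_eq, fderiv_const_mul hdiff]
  have h2 := pd_gpow (a / 2 - 1) j x hx
  rw [pd] at h2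
  simp only [ContinuousLinearMap.coe_smul', Pi.smul_apply, smul_eq_mul]
  rw [h2, show a / 2 - 1 - 1 = a / 2 - 2 by ring]

lemma sum_sq (x : En n) (c : ℝ) : ∑ j, x j * (c * x j) = c * g x := by
  rw [g, Finset.mul_sum]
  exact Finset.sum_congr rfl fun j _ => by ring

lemma sum_formula (x : En n) (c1 c2 : ℝ) (i : Fin n) :
    ∑ j, x j * (c1 * (if i = j then 1 else 0) + c2 * x j) = c1 * x i + c2 * g x := by
  have h1 : ∑ j, x j * (c1 * (if i = j then 1 else 0)) = c1 * x i := by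
    rw [Finset.sum_congr rfl (fun j _ =>
      show x j * (c1 * (if i = j then 1 else 0)) = if i = j then c1 * x j else 0 by
        by_cases h : i = j <;> simp [h] <;> ring)]
    rw [Finset.sum_ite_eq]
    simp
  have h2 := sum_sq x c2
  calc ∑ j, x j * (c1 * (if i = j then 1 else 0) + c2 * x j)
      = ∑ j, (x j * (c1 * (if i = j then 1 else 0)) + x j * (c2 * x j)) :=
        Finset.sum_congr rfl fun j _ => by ring
    _ = c1 * x i + c2 * g x := by rw [Finset.sum_add_distrib, h1, h2]

end BAux

open BAux

/-- For `u(x) = |x|^{4-n}`, `n ≥ 5`, the Pohozaev boundary term vanishes identically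
on `∂B_r` for every `r > 0`. -/
theorem Bterm_fundamental_vanishes {n : ℕ} (hn : 5 ≤ n) (r : ℝ) (hr : 0 < r) :
    ∀ x ∈ sphere (0 : En n) r,
      Bterm n r (fun y => ‖y‖ ^ ((4 : ℝ) - n)) x = 0 := by
  intro x hx
  have hxr : ‖x‖ = r := by simpa using hx
  have hs : g x = r ^ 2 := by
    have h2 : g x = ‖x‖ ^ 2 := by
      rw [EuclideanSpace.norm_eq, Real.sq_sqrt (Finset.sum_nonneg fun i _ => sq_nonneg _)]
      simp [g, sq, Real.norm_eq_abs, sq_abs]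
    rw [h2, hxr]
  have hgx : g x ≠ 0 := by rw [hs]; positivity
  set a : ℝ := (4 : ℝ) - n with ha
  set s : ℝ := g x with hsdef
  set t : ℝ := s ^ (a / 2 - 1) with htdef
  set t2 : ℝ := s ^ (a / 2 - 2) with ht2def
  have ht : t = t2 * s := by
    rw [htdef, ht2def, show a / 2 - 1 = (a / 2 - 2) + 1 by ring, Real.rpow_add_one hgx]
  have hUx : ‖x‖ ^ a = t * s := by
    rw [congrFun U_eq x, show a / 2 = (a / 2 - 1) + 1 by ring, Real.rpow_add_one hgx]
  have hL : lap (fun y : En n => ‖y‖ ^ a) x = (-2 * a) * t := lap_U x hgx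
  have hS1 : ∑ i, x i * pd i (fun y : En n => ‖y‖ ^ a) x = a * t * s := by
    rw [Finset.sum_congr rfl fun i _ => by
      rw [pd_U i x hgx, show a * t * x i = a * t * x i by rfl]]
    calc ∑ i, x i * (a * s ^ (a/2-1) * x i) = ∑ i, x i * ((a * t) * x i) :=
          Finset.sum_congr rfl fun i _ => by rw [← htdef]
      _ = a * t * s := sum_sq x (a * t)
  have hS2 : ∑ i, x i * pd i (lap (fun y : En n => ‖y‖ ^ a)) x
      = -2 * a * (a - 2) * t2 * s := by
    calc ∑ i, x i * pd i (lap (fun y : En n => ‖y‖ ^ a)) x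
        = ∑ i, x i * ((-2 * a * (a - 2) * t2) * x i) :=
          Finset.sum_congr rfl fun i _ => by rw [pd_lap_U i x hgx, ← ht2def]; ring
      _ = -2 * a * (a - 2) * t2 * s := sum_sq x _
  have hinner : ∀ i : Fin n, ∑ j, x j * pd j (pd i (fun y : En n => ‖y‖ ^ a)) x
      = (a * t + a * (a - 2) * t2 * s) * x i := by
    intro i
    calc ∑ j, x j * pd j (pd i (fun y : En n => ‖y‖ ^ a)) x
        = ∑ j, x j * ((a * t) * (if i = j then 1 else 0) + (a * (a - 2) * t2 * x i) * x j) :=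
          Finset.sum_congr rfl fun j _ => by rw [pd_pd_U i j x hgx, ← htdef, ← ht2def]; ring
      _ = (a * t) * x i + (a * (a - 2) * t2 * x i) * s := sum_formula x _ _ i
      _ = (a * t + a * (a - 2) * t2 * s) * x i := by ring
  have hS3 : ∑ i, x i * ndiv r (pd i (fun y : En n => ‖y‖ ^ a)) x
      = ((a * t + a * (a - 2) * t2 * s) / r) * s := by
    calc ∑ i, x i * ndiv r (pd i (fun y : En n => ‖y‖ ^ a)) x
        = ∑ i, x i * (((a * t + a * (a - 2) * t2 * s) / r) * x i) :=
          Finset.sum_congr rfl fun i _ => by rw [ndiv, hinner i]; ring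
      _ = _ := sum_sq x _
  rw [Bterm, ndiv, ndiv, hS1, hS2, hS3, hL, hUx]
  rw [ht, hs, ha]
  field_simp
  ring
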